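/- For a finite simple graph G with at least one vertex, the chromatic number satisfies χ(G) = 1 + min over all maximal independent sets I of G of χ(G[V ∖ I]), where G[S] denotes the subgraph induced on S. -/

import Mathlib

/-- `s` is an independent set of `G`: no two of its vertices are adjacent. -/
def SimpleGraph.IsIndepSet' {V : Type*} (G : SimpleGraph V) (s : Set V) : Prop :=
  ∀ v ∈ s, ∀ w ∈ s, ¬ G.Adj v w

/-- `s` is a maximal independent set of `G`. -/
def SimpleGraph.IsMaxIndepSet {V : Type*} (G : SimpleGraph V) (s : Set V) : Prop :=
  G.IsIndepSet' s ∧ ∀ t : Set V, G.IsIndepSet' t → s ⊆ t → s = t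

/-- Every independent set extends to a maximal independent set (Zorn). -/
lemma exists_isMaxIndepSet_superset {V : Type*} (G : SimpleGraph V) (s : Set V)
    (hs : G.IsIndepSet' s) : ∃ I, s ⊆ I ∧ G.IsMaxIndepSet I := by
  obtain ⟨m, hsm, hm⟩ := zorn_subset_nonempty {t : Set V | G.IsIndepSet' t}
    (fun c hc hchain _ => by
      refine ⟨⋃₀ c, ?_, fun t ht => Set.subset_sUnion_of_mem ht⟩
      intro v hv w hw hadj
      obtain ⟨a, hac, hva⟩ := hv
      obtain ⟨b, hbc, hwb⟩ := hw
      rcases hchain.total hac hbc with h | h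
      · exact hc hbc v (h hva) w hwb hadj
      · exact hc hac v hva w (h hwb) hadj) s hs
  exact ⟨m, hsm, hm.1, fun t ht hmt => subset_antisymm hmt (hm.2 ht hmt)⟩

lemma colorable_of_isMaxIndepSet {V : Type*} (G : SimpleGraph V) {I : Set V}
    (hI : G.IsMaxIndepSet I) {n : ℕ} (h : (G.induce Iᶜ).Colorable n) :
    G.Colorable (n + 1) := by
  classical
  obtain ⟨c⟩ := h
  refine ⟨SimpleGraph.Coloring.mk
    (fun v => if hv : v ∈ I then Fin.last n else (c ⟨v, hv⟩).castSucc) ?_⟩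
  intro v w hadj
  by_cases hv : v ∈ I <;> by_cases hw : w ∈ I <;> simp only [hv, hw, dif_pos, dif_neg,
    not_false_iff]
  · exact absurd hadj (hI.1 v hv w hw)
  · exact fun h => (Fin.castSucc_lt_last _).ne' h
  · exact fun h => (Fin.castSucc_lt_last _).ne h
  · intro h
    exact c.valid (by exact hadj : (G.induce Iᶜ).Adj ⟨v, hv⟩ ⟨w, hw⟩)
      (Fin.castSucc_injective n h)

lemma exists_isMaxIndepSet_colorable {V : Type*} (G : SimpleGraph V) {k : ℕ}
    (h : G.Colorable (k + 1)) :
    ∃ I : Set V, G.IsMaxIndepSet I ∧ (G.induce Iᶜ).Colorable k := by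
  classical
  obtain ⟨c⟩ := h
  have hind : G.IsIndepSet' {v | c v = 0} := by
    intro v hv w hw hadj
    exact c.valid hadj (hv.trans hw.symm)
  obtain ⟨I, hsub, hI⟩ := exists_isMaxIndepSet_superset G _ hind
  refine ⟨I, hI, ⟨SimpleGraph.Coloring.mk
    (fun v => (c v.1).pred (fun h0 => v.2 (hsub h0))) ?_⟩⟩
  intro v w hadj h
  exact c.valid (by exact hadj) (by
    have := congrArg Fin.succ h
    rwa [Fin.succ_pred, Fin.succ_pred] at this)

theorem stmt_2 {V : Type*} [Fintype V] [Nonempty V] (G : SimpleGraph V) :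
    G.chromaticNumber =
      1 + ⨅ I : {I : Set V // G.IsMaxIndepSet I}, (G.induce (I.1ᶜ)).chromaticNumber := by
  classical
  obtain ⟨I₀, -, hI₀⟩ := exists_isMaxIndepSet_superset G ∅ (by intro v hv; simp at hv)
  have hne : Nonempty {I : Set V // G.IsMaxIndepSet I} := ⟨⟨I₀, hI₀⟩⟩
  set f : {I : Set V // G.IsMaxIndepSet I} → ℕ∞ :=
    fun I => (G.induce (I.1ᶜ)).chromaticNumber with hf
  -- the infimum is attained
  obtain ⟨J, hJmem, hJmin⟩ := (wellFounded_lt (α := ℕ∞)).has_min (Set.range f)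
    (Set.range_nonempty f)
  obtain ⟨Imin, rfl⟩ := hJmem
  have hinf : (⨅ I, f I) = f Imin := by
    refine le_antisymm (iInf_le _ _) (le_iInf fun I => ?_)
    exact not_lt.1 (hJmin (f I) (Set.mem_range_self I))
  rw [hinf]
  refine le_antisymm ?_ ?_
  · -- χ(G) ≤ 1 + χ(G[Icᶜ])
    have hcol := (G.induce (Imin.1ᶜ)).colorable_chromaticNumber_of_fintype
    have hfin : f Imin ≠ ⊤ := by
      have := (G.induce (Imin.1ᶜ)).colorable_of_fintype.chromaticNumber_le
      exact (this.trans_lt (WithTop.coe_lt_top _)).ne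
    have h2 : G.Colorable (ENat.toNat (f Imin) + 1) :=
      colorable_of_isMaxIndepSet G Imin.2 hcol
    have := h2.chromaticNumber_le
    calc G.chromaticNumber ≤ ((ENat.toNat (f Imin) + 1 : ℕ) : ℕ∞) := this
      _ = 1 + f Imin := by
          rw [Nat.cast_add, Nat.cast_one, ENat.coe_toNat hfin, add_comm]
  · -- 1 + inf ≤ χ(G)
    have hχfin : G.chromaticNumber ≠ ⊤ := by
      have := G.colorable_of_fintype.chromaticNumber_le
      exact (this.trans_lt (WithTop.coe_lt_top _)).ne
    set n := ENat.toNat G.chromaticNumber with hn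
    have hcol : G.Colorable n := G.colorable_chromaticNumber_of_fintype
    have hpos : 0 < G.chromaticNumber := G.chromaticNumber_pos G.colorable_of_fintype
    have hnz : n ≠ 0 := by
      simp only [hn, ne_eq, ENat.toNat_eq_zero, not_or]; exact ⟨hpos.ne', hχfin⟩
    obtain ⟨k, hk⟩ : ∃ k, n = k + 1 := ⟨n - 1, by omega⟩
    rw [hk] at hcol
    obtain ⟨I, hI, hIcol⟩ := exists_isMaxIndepSet_colorable G hcol
    have h1 : f Imin ≤ f ⟨I, hI⟩ := not_lt.1 (hJmin _ (Set.mem_range_self _))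
    have h2 : f ⟨I, hI⟩ ≤ (k : ℕ∞) := hIcol.chromaticNumber_le
    calc 1 + f Imin ≤ 1 + (k : ℕ∞) := by
          exact add_le_add le_rfl (h1.trans h2)
      _ = ((k + 1 : ℕ) : ℕ∞) := by push_cast; ring
      _ = G.chromaticNumber := by
          rw [← hk, ← ENat.coe_toNat hχfin]
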